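/- Blind division agreement with rewrite-class disagreement: for every token t, distinct tokens t₁ ≠ t₂, rationals 0 < lo < hi, and dimension tag d, the expressions e₁ = Div (Meas t lo hi d) (Meas t lo hi d) and e₂ = Div (Meas t₁ lo hi d) (Meas t₂ lo hi d) satisfy forgetTokens e₁ = forgetTokens e₂ (hence BlindEncl (forgetTokens e₁) = BlindEncl (forgetTokens e₂)), yet Interchangeable e₁ (Exact 1 d) holds while OneWayOnly e₂ (Exact 1 d) holds. -/
import Mathlib


abbrev Token := ℕ

inductive Dim where
  | base
deriving DecidableEq

inductive Expr where
  | Exact (q : ℚ) (d : Dim)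
  | Meas (t : Token) (lo hi : ℚ) (d : Dim)
  | Add (a b : Expr)
  | Sub (a b : Expr)
  | Mul (a b : Expr)
  | Div (a b : Expr)
  | Neg (a : Expr)

abbrev TokenEnv := Token → ℚ

def TokenConsistent (σ : TokenEnv) : Expr → Prop
  | .Exact _ _ => True
  | .Meas t lo hi _ => lo ≤ σ t ∧ σ t ≤ hi
  | .Add a b => TokenConsistent σ a ∧ TokenConsistent σ b
  | .Sub a b => TokenConsistent σ a ∧ TokenConsistent σ b
  | .Mul a b => TokenConsistent σ a ∧ TokenConsistent σ b
  | .Div a b => TokenConsistent σ a ∧ TokenConsistent σ b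
  | .Neg a => TokenConsistent σ a

def eval (σ : TokenEnv) : Expr → ℚ
  | .Exact q _ => q
  | .Meas t _ _ _ => σ t
  | .Add a b => eval σ a + eval σ b
  | .Sub a b => eval σ a - eval σ b
  | .Mul a b => eval σ a * eval σ b
  | .Div a b => eval σ a / eval σ b
  | .Neg a => - eval σ a

def Encl (e : Expr) : Set ℚ := {v : ℚ | ∃ σ : TokenEnv, TokenConsistent σ e ∧ eval σ e = v}

def RewritesTo (e e' : Expr) : Prop := Encl e' ⊆ Encl e

def Interchangeable (e e' : Expr) : Prop := Encl e = Encl e'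

def OneWayOnly (e e' : Expr) : Prop := RewritesTo e e' ∧ ¬ RewritesTo e' e

inductive BlindExpr where
  | BlindExact (q : ℚ) (d : Dim)
  | BlindMeas (lo hi : ℚ) (d : Dim)
  | Add (a b : BlindExpr)
  | Sub (a b : BlindExpr)
  | Mul (a b : BlindExpr)
  | Div (a b : BlindExpr)
  | Neg (a : BlindExpr)

def forgetTokens : Expr → BlindExpr
  | .Exact q d => .BlindExact q d
  | .Meas _ lo hi d => .BlindMeas lo hi d
  | .Add a b => .Add (forgetTokens a) (forgetTokens b)
  | .Sub a b => .Sub (forgetTokens a) (forgetTokens b)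
  | .Mul a b => .Mul (forgetTokens a) (forgetTokens b)
  | .Div a b => .Div (forgetTokens a) (forgetTokens b)
  | .Neg a => .Neg (forgetTokens a)

def BlindEncl : BlindExpr → Set ℚ
  | .BlindExact q _ => {q}
  | .BlindMeas lo hi _ => {v : ℚ | lo ≤ v ∧ v ≤ hi}
  | .Add a b => {v : ℚ | ∃ x ∈ BlindEncl a, ∃ y ∈ BlindEncl b, x + y = v}
  | .Sub a b => {v : ℚ | ∃ x ∈ BlindEncl a, ∃ y ∈ BlindEncl b, x - y = v}
  | .Mul a b => {v : ℚ | ∃ x ∈ BlindEncl a, ∃ y ∈ BlindEncl b, x * y = v}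
  | .Div a b => {v : ℚ | ∃ x ∈ BlindEncl a, ∃ y ∈ BlindEncl b, x / y = v}
  | .Neg a => {v : ℚ | ∃ x ∈ BlindEncl a, -x = v}

theorem blind_division_patterns_agree_but_rewrite_classes_differ
    (t t₁ t₂ : Token) (hne : t₁ ≠ t₂) (lo hi : ℚ) (hpos : 0 < lo) (hlt : lo < hi) (d : Dim) :
    forgetTokens (Expr.Div (.Meas t lo hi d) (.Meas t lo hi d))
      = forgetTokens (Expr.Div (.Meas t₁ lo hi d) (.Meas t₂ lo hi d)) ∧
    BlindEncl (forgetTokens (Expr.Div (.Meas t lo hi d) (.Meas t lo hi d)))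
      = BlindEncl (forgetTokens (Expr.Div (.Meas t₁ lo hi d) (.Meas t₂ lo hi d))) ∧
    Interchangeable (.Div (.Meas t lo hi d) (.Meas t lo hi d)) (.Exact 1 d) ∧
    OneWayOnly (.Div (.Meas t₁ lo hi d) (.Meas t₂ lo hi d)) (.Exact 1 d) := by
  refine ⟨rfl, rfl, ?_, ?_, ?_⟩
  · -- Interchangeable
    apply Set.eq_of_subset_of_subset
    · rintro v ⟨σ, ⟨⟨h1, h2⟩, _⟩, rfl⟩
      have hσ : σ t ≠ 0 := ne_of_gt (lt_of_lt_of_le hpos h1)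
      exact ⟨fun _ => 0, trivial, by simp [eval, div_self hσ]⟩
    · rintro v ⟨σ, _, rfl⟩
      refine ⟨fun _ => lo, ⟨⟨le_refl _, le_of_lt hlt⟩, ⟨le_refl _, le_of_lt hlt⟩⟩, ?_⟩
      simp [eval, div_self (ne_of_gt hpos)]
  · -- RewritesTo e₂ (Exact 1 d)
    rintro v ⟨σ, _, rfl⟩
    refine ⟨fun _ => lo, ⟨⟨le_refl _, le_of_lt hlt⟩, ⟨le_refl _, le_of_lt hlt⟩⟩, ?_⟩
    simp [eval, div_self (ne_of_gt hpos)]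
  · -- ¬ reverse
    intro h
    have hmem : (lo / hi : ℚ) ∈ Encl (.Div (.Meas t₁ lo hi d) (.Meas t₂ lo hi d)) := by
      refine ⟨fun n => if n = t₁ then lo else hi, ⟨?_, ?_⟩, ?_⟩
      · simp [TokenConsistent, le_of_lt hlt]
      · simp [TokenConsistent, hne.symm, le_of_lt hlt]
      · simp [eval, hne.symm]
    have := h hmem
    obtain ⟨σ, _, hv⟩ := this
    have : (lo / hi : ℚ) = 1 := hv.symm
    have hlt1 : (lo / hi : ℚ) < 1 := by
      rw [div_lt_one (lt_trans hpos hlt)]; exact hlt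
    exact absurd this (ne_of_lt hlt1)
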